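/- Let z : ℝⁿ → ℝ be given by z(x) = Σᵢ₌₁ᵏ aᵢ·ReLU(wᵢ·x + bᵢ) + c, where aᵢ, bᵢ, c ∈ ℝ, wᵢ ∈ ℝⁿ, and ReLU(t) = max(t, 0). Suppose p ∈ ℝⁿ and an index h satisfy: w_h·p + b_h = 0, w_h ≠ 0, a_h ≠ 0, and wᵢ·p + bᵢ ≠ 0 for all i ≠ h. Then z is not differentiable at p. -/

import Mathlib

open Matrix

/-- `t ↦ max t 0` is differentiable away from `0`. -/
lemma relu_diff_at {t₀ : ℝ} (ht : t₀ ≠ 0) :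
    DifferentiableAt ℝ (fun t : ℝ => max t 0) t₀ := by
  rcases ht.lt_or_gt with hlt | hgt
  · have hev : (fun t : ℝ => max t 0) =ᶠ[nhds t₀] fun _ => (0 : ℝ) := by
      filter_upwards [eventually_lt_nhds hlt] with t ht'
      exact max_eq_right ht'.le
    exact (differentiableAt_const 0).congr_of_eventuallyEq hev
  · have hev : (fun t : ℝ => max t 0) =ᶠ[nhds t₀] fun t => t := by
      filter_upwards [eventually_gt_nhds hgt] with t ht'
      exact max_eq_left ht'.le
    exact differentiableAt_fun_id.congr_of_eventuallyEq hev

lemma relu_not_diff_zero : ¬ DifferentiableAt ℝ (fun t : ℝ => max t 0) 0 := by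
  intro hd
  have habs : (fun t : ℝ => |t|) = fun t : ℝ => 2 * max t 0 - t := by
    funext t
    rcases le_or_gt 0 t with h0 | h0
    · rw [abs_of_nonneg h0, max_eq_left h0]; ring
    · rw [abs_of_neg h0, max_eq_right h0.le]; ring
  have : DifferentiableAt ℝ (fun t : ℝ => |t|) 0 := by
    rw [habs]
    exact ((hd.const_mul 2).sub differentiableAt_fun_id)
  exact not_differentiableAt_abs_zero this

/-- At a generic boundary point (lying on exactly one boundary hyperplane, with nonzero
incoming weight vector and nonzero outgoing weight for that neuron), a one-hidden-layer
ReLU network with scalar output fails to be differentiable. -/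
theorem relu_network_not_differentiable_on_boundary
    (n k : ℕ) (a : Fin k → ℝ) (w : Fin k → Fin n → ℝ) (b : Fin k → ℝ) (c : ℝ)
    (z : (Fin n → ℝ) → ℝ)
    (hz : ∀ x, z x = (∑ i, a i * max (dotProduct (w i) x + b i) 0) + c)
    (p : Fin n → ℝ) (h : Fin k)
    (hzero : dotProduct (w h) p + b h = 0)
    (hwh : w h ≠ 0) (hah : a h ≠ 0)
    (hother : ∀ i, i ≠ h → dotProduct (w i) p + b i ≠ 0) :
    ¬ DifferentiableAt ℝ z p := by
  intro hdz
  -- linear part x ↦ w i ⬝ x + b i is differentiable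
  have hlin : ∀ i : Fin k, DifferentiableAt ℝ (fun x : Fin n → ℝ => dotProduct (w i) x + b i) p := by
    intro i
    apply DifferentiableAt.add_const
    have hd : DifferentiableAt ℝ (fun x : Fin n → ℝ => ∑ j, w i j * x j) p :=
      DifferentiableAt.fun_sum fun j _ =>
        (differentiableAt_const (w i j)).mul ((differentiable_apply j p))
    have he : (fun x : Fin n → ℝ => ∑ j, w i j * x j) = dotProduct (w i) := by
      funext x; simp [dotProduct]
    rwa [he] at hd
  -- the sum over i ≠ h is differentiable at p
  have hrest : DifferentiableAt ℝ
      (fun x => ∑ i ∈ Finset.univ.erase h, a i * max (dotProduct (w i) x + b i) 0) p := by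
    apply DifferentiableAt.fun_sum
    intro i hi
    have hne := hother i (Finset.ne_of_mem_erase hi)
    exact (differentiableAt_const (a i)).fun_mul ((relu_diff_at hne).comp p (hlin i) :)
  -- hence the h-th term is differentiable at p
  have hzsum : z = fun x => (∑ i, a i * max (dotProduct (w i) x + b i) 0) + c := funext hz
  have hsplit : ∀ x, a h * max (dotProduct (w h) x + b h) 0 =
      z x - c - ∑ i ∈ Finset.univ.erase h, a i * max (dotProduct (w i) x + b i) 0 := by
    intro x
    rw [hz x, ← Finset.add_sum_erase _ _ (Finset.mem_univ h)]
    ring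
  have hf : DifferentiableAt ℝ (fun x => max (dotProduct (w h) x + b h) 0) p := by
    have h1 : DifferentiableAt ℝ (fun x => a h * max (dotProduct (w h) x + b h) 0) p := by
      have := ((hdz.sub_const c).sub hrest)
      exact this.congr_of_eventuallyEq (Filter.Eventually.of_forall hsplit)
    have h2 := h1.const_mul (a h)⁻¹
    refine h2.congr_of_eventuallyEq (Filter.Eventually.of_forall fun x => ?_)
    field_simp
  -- pick a direction v with w h ⬝ v ≠ 0
  obtain ⟨j, hj⟩ : ∃ j, w h j ≠ 0 := by
    by_contra hc
    push_neg at hc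
    exact hwh (funext hc)
  set v : Fin n → ℝ := Pi.single j 1 with hv
  have hs : dotProduct (w h) v = w h j := by
    simp [hv, dotProduct, Pi.single_apply]
  -- the curve t ↦ p + t • v is differentiable
  have hcurve : ∀ t : ℝ, DifferentiableAt ℝ (fun t : ℝ => p + t • v) t := by
    intro t
    exact (differentiableAt_const p).add (differentiableAt_fun_id.fun_smul (differentiableAt_const v))
  -- compose: φ t = max (t * (w h j)) 0 is differentiable at 0
  have hφ : DifferentiableAt ℝ (fun t : ℝ => max (t * w h j) 0) 0 := by
    have hf' : DifferentiableAt ℝ (fun x => max (dotProduct (w h) x + b h) 0)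
        ((fun t : ℝ => p + t • v) 0) := by
      rw [show (fun t : ℝ => p + t • v) 0 = p by simp]; exact hf
    have hcomp := DifferentiableAt.comp (0 : ℝ) hf' (hcurve 0)
    refine hcomp.congr_of_eventuallyEq (Filter.Eventually.of_forall fun t => ?_)
    have heq : dotProduct (w h) (p + t • v) + b h = t * w h j := by
      rw [dotProduct_add, dotProduct_smul]
      rw [show (t • dotProduct (w h) v) = t * w h j by rw [hs]; rfl]
      linarith [hzero]
    show max (t * w h j) 0 = max (dotProduct (w h) ((fun t : ℝ => p + t • v) t) + b h) 0
    simp only []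
    rw [heq]
  -- rescale: ψ t = max t 0 differentiable at 0
  have hψ : DifferentiableAt ℝ (fun t : ℝ => max t 0) 0 := by
    have hdiv : DifferentiableAt ℝ (fun t : ℝ => t / w h j) 0 :=
      differentiableAt_fun_id.div_const _
    have hφ' : DifferentiableAt ℝ (fun t : ℝ => max (t * w h j) 0)
        ((fun t : ℝ => t / w h j) 0) := by
      rw [show (fun t : ℝ => t / w h j) 0 = 0 by simp]; exact hφ
    have hcomp2 := DifferentiableAt.comp (0 : ℝ) hφ' hdiv
    refine hcomp2.congr_of_eventuallyEq (Filter.Eventually.of_forall fun t => ?_)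
    show max t 0 = max (t / w h j * w h j) 0
    rw [div_mul_cancel₀ _ hj]
  exact relu_not_diff_zero hψ
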